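/- For n ≥ 1, the number of inversion sequences of length n avoiding the pattern 021 equals the large Schröder number r_{n-1}, i.e., the number of Schröder paths from (0,0) to (2(n-1),0). -/

import Mathlib

/-- Steps of a Schröder path: up `(1,1)`, down `(1,-1)`, flat `(2,0)`. -/
inductive SchStep | U | D | F
deriving DecidableEq

/-- Horizontal displacement of a step. -/
def SchStep.x : SchStep → ℕ
  | .U => 1
  | .D => 1
  | .F => 2

/-- Vertical displacement of a step. -/
def SchStep.h : SchStep → ℤ
  | .U => 1
  | .D => -1
  | .F => 0

/-- `p` is a Schröder `m`-path: it goes from `(0,0)` to `(2m,0)` using steps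
`(1,1)`, `(1,-1)`, `(2,0)` and never goes below the `x`-axis. -/
def IsSchroderPath (m : ℕ) (p : List SchStep) : Prop :=
  (p.map SchStep.x).sum = 2 * m ∧ (p.map SchStep.h).sum = 0 ∧
    ∀ q : List SchStep, q <+: p → 0 ≤ (q.map SchStep.h).sum

def wsum (p : List SchStep) : ℕ := (p.map SchStep.x).sum
def hsum (p : List SchStep) : ℤ := (p.map SchStep.h).sum

def nonU : SchStep → Bool | .U => false | _ => true

/-- Length of the trailing run of non-up steps. -/
def trail (p : List SchStep) : ℕ := (p.reverse.takeWhile nonU).length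

/-- The `o`-th child of a Schröder path in the ECO generating-tree construction. -/
def chld (p : List SchStep) (o : ℕ) : List SchStep :=
  if o = 0 then p ++ [.F]
  else p.take (p.length - (o-1)) ++ SchStep.U :: (p.drop (p.length - (o-1)) ++ [SchStep.D])

/-- The parent of a Schröder path in the ECO generating-tree construction. -/
def par (p : List SchStep) : List SchStep :=
  if p.getLast? = some SchStep.F then p.dropLast
  else ((p.dropLast.reverse).erase SchStep.U).reverse

lemma hsum_append (a b : List SchStep) : hsum (a ++ b) = hsum a + hsum b := by
  simp [hsum]

lemma wsum_append (a b : List SchStep) : wsum (a ++ b) = wsum a + wsum b := by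
  simp [wsum]

lemma hsum_cons (s : SchStep) (a : List SchStep) : hsum (s :: a) = s.h + hsum a := by
  simp [hsum]

lemma wsum_cons (s : SchStep) (a : List SchStep) : wsum (s :: a) = s.x + wsum a := by
  simp [wsum]

lemma isPath_iff (m : ℕ) (p : List SchStep) :
    IsSchroderPath m p ↔ wsum p = 2*m ∧ hsum p = 0 ∧ ∀ i, 0 ≤ hsum (p.take i) := by
  constructor
  · rintro ⟨h1, h2, h3⟩
    exact ⟨h1, h2, fun i => h3 _ (List.take_prefix i p)⟩
  · rintro ⟨h1, h2, h3⟩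
    refine ⟨h1, h2, fun q hq => ?_⟩
    rw [List.prefix_iff_eq_take] at hq
    rw [show (q.map SchStep.h).sum = hsum q from rfl, hq]
    exact h3 _

lemma nonU_h_nonpos {s : SchStep} (h : nonU s = true) : s.h ≤ 0 := by
  cases s <;> simp_all [nonU, SchStep.h]

lemma not_nonU_eq_U {s : SchStep} (h : ¬ nonU s = true) : s = SchStep.U := by
  cases s <;> simp_all [nonU]

lemma hsum_nonpos (L : List SchStep) (h : ∀ s ∈ L, nonU s = true) : hsum L ≤ 0 := by
  induction L with
  | nil => simp [hsum]
  | cons a l ih =>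
    rw [hsum_cons]
    have h1 := nonU_h_nonpos (h a (by simp))
    have h2 := ih (fun s hs => h s (by simp [hs]))
    omega

lemma wsum_eq_zero {p : List SchStep} (h : wsum p = 0) : p = [] := by
  cases p with
  | nil => rfl
  | cons s l =>
    rw [wsum_cons] at h
    cases s <;> simp [SchStep.x] at h

lemma trail_le_length (p : List SchStep) : trail p ≤ p.length := by
  have := (List.takeWhile_prefix (l := p.reverse) nonU).length_le
  simpa [trail] using this

lemma takeWhile_append_all {α : Type*} {P : α → Bool} {l₁ : List α} (l₂ : List α)
    (h : ∀ s ∈ l₁, P s = true) : (l₁ ++ l₂).takeWhile P = l₁ ++ l₂.takeWhile P := by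
  induction l₁ with
  | nil => simp
  | cons a l ih =>
    simp only [List.cons_append, List.takeWhile_cons, h a (by simp), if_true]
    rw [ih (fun s hs => h s (by simp [hs]))]

lemma trail_concat_nonU (p : List SchStep) (s : SchStep) (hs : nonU s = true) :
    trail (p ++ [s]) = trail p + 1 := by
  simp [trail, List.takeWhile_cons, hs]

lemma trail_decomp (A B : List SchStep) (hB : ∀ s ∈ B, nonU s = true) :
    trail (A ++ SchStep.U :: B) = B.length := by
  have h1 : (A ++ SchStep.U :: B).reverse = B.reverse ++ SchStep.U :: A.reverse := by
    simp
  rw [trail, h1, takeWhile_append_all _ (fun s hs => hB s (List.mem_reverse.1 hs))]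
  simp [List.takeWhile_cons, nonU]

lemma nonU_drop (p : List SchStep) (t : ℕ) (ht : t ≤ trail p) :
    ∀ s ∈ p.drop (p.length - t), nonU s = true := by
  intro s hs
  have hs' : s ∈ (p.drop (p.length - t)).reverse := List.mem_reverse.2 hs
  rw [List.reverse_drop] at hs'
  have htw : List.takeWhile nonU p.reverse = p.reverse.take (trail p) :=
    List.prefix_iff_eq_take.1 (List.takeWhile_prefix nonU)
  have : p.reverse.take (p.length - (p.length - t)) = (List.takeWhile nonU p.reverse).take t := by
    rw [htw, List.take_take]
    congr 1
    have := trail_le_length p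
    omega
  rw [this] at hs'
  exact List.mem_takeWhile_imp (List.take_subset _ _ hs')

lemma hsum_take_append (X Y : List SchStep) (i : ℕ) :
    hsum ((X ++ Y).take i) =
      if i ≤ X.length then hsum (X.take i) else hsum X + hsum (Y.take (i - X.length)) := by
  rw [List.take_append, hsum_append]
  split
  · rename_i h
    rcases Nat.lt_or_ge i X.length with h' | h'
    · rw [Nat.sub_eq_zero_of_le (le_of_lt h')]
      simp [hsum]
    · have : i = X.length := le_antisymm h h'
      rw [this, Nat.sub_self]
      simp [hsum]
  · rename_i h
    rw [List.take_of_length_le (by omega)]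

lemma take_append_left (X Y : List SchStep) (i : ℕ) (h : i ≤ X.length) :
    (X ++ Y).take i = X.take i := by
  rw [List.take_append, Nat.sub_eq_zero_of_le h]
  simp

/-- The decomposition underlying `chld p o` for `o ≥ 1`. -/
lemma chld_eq_decomp (p : List SchStep) (o : ℕ) (ho : 1 ≤ o) :
    chld p o = p.take (p.length - (o-1)) ++
      SchStep.U :: (p.drop (p.length - (o-1)) ++ [SchStep.D]) := by
  rw [chld, if_neg (by omega)]

lemma length_drop_tail (p : List SchStep) (t : ℕ) (ht : t ≤ p.length) :
    (p.drop (p.length - t)).length = t := by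
  rw [List.length_drop]; omega

lemma chld_trail_zero (p : List SchStep) : trail (chld p 0) = trail p + 1 := by
  rw [chld, if_pos rfl]
  exact trail_concat_nonU p _ rfl

lemma chld_trail_pos (p : List SchStep) (o : ℕ) (ho : 1 ≤ o) (ho' : o ≤ trail p + 1) :
    trail (chld p o) = o := by
  rw [chld_eq_decomp p o ho, trail_decomp]
  · rw [List.length_append, length_drop_tail p (o-1) (le_trans (by omega) (trail_le_length p))]
    simp; omega
  · intro s hs
    rcases List.mem_append.1 hs with hs | hs
    · exact nonU_drop p (o-1) (by omega) s hs
    · simp at hs; subst hs; rfl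

lemma chld_getLast_zero (p : List SchStep) : (chld p 0).getLast? = some SchStep.F := by
  rw [chld, if_pos rfl]; exact List.getLast?_concat

lemma chld_getLast_pos (p : List SchStep) (o : ℕ) (ho : 1 ≤ o) :
    (chld p o).getLast? = some SchStep.D := by
  rw [chld_eq_decomp p o ho]
  rw [show p.take (p.length - (o-1)) ++
      SchStep.U :: (p.drop (p.length - (o-1)) ++ [SchStep.D])
    = (p.take (p.length - (o-1)) ++ SchStep.U :: p.drop (p.length - (o-1))) ++ [SchStep.D] by
      simp]
  exact List.getLast?_concat

lemma chld_inj (p : List SchStep) (o₁ o₂ : ℕ) (h₁ : o₁ ≤ trail p + 1) (h₂ : o₂ ≤ trail p + 1)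
    (h : chld p o₁ = chld p o₂) : o₁ = o₂ := by
  rcases Nat.eq_zero_or_pos o₁ with rfl | ho₁ <;> rcases Nat.eq_zero_or_pos o₂ with rfl | ho₂
  · rfl
  · have := chld_getLast_zero p
    rw [h, chld_getLast_pos p o₂ ho₂] at this
    simp at this
  · have := chld_getLast_zero p
    rw [← h, chld_getLast_pos p o₁ ho₁] at this
    simp at this
  · have := chld_trail_pos p o₁ ho₁ h₁
    rw [h, chld_trail_pos p o₂ ho₂ h₂] at this
    omega

/-- `par` recovers the parent. -/
lemma par_decomp (A B : List SchStep) (hB : ∀ s ∈ B, nonU s = true) :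
    par (A ++ SchStep.U :: (B ++ [SchStep.D])) = A ++ B := by
  have hassoc : A ++ SchStep.U :: (B ++ [SchStep.D])
      = (A ++ SchStep.U :: B) ++ [SchStep.D] := by simp
  rw [hassoc, par, List.getLast?_concat]
  rw [if_neg (by simp)]
  rw [List.dropLast_concat]
  have hrev : (A ++ SchStep.U :: B).reverse = B.reverse ++ SchStep.U :: A.reverse := by simp
  rw [hrev, List.erase_append_right _ (by
    intro hU
    have := hB _ (List.mem_reverse.1 hU)
    simp [nonU] at this)]
  rw [List.erase_cons_head]
  simp

lemma par_chld (p : List SchStep) (o : ℕ) (ho : o ≤ trail p + 1) : par (chld p o) = p := by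
  rcases Nat.eq_zero_or_pos o with rfl | hpos
  · rw [chld, if_pos rfl, par, List.getLast?_concat, if_pos rfl, List.dropLast_concat]
  · rw [chld_eq_decomp p o hpos, par_decomp _ _ (fun s hs => nonU_drop p (o-1) (by omega) s hs)]
    exact List.take_append_drop _ p

lemma hsum_take_F (j : ℕ) : hsum ([SchStep.F].take j) = 0 := by
  cases j <;> simp [hsum, SchStep.h]

lemma hsum_take_D (j : ℕ) : -1 ≤ hsum ([SchStep.D].take j) := by
  cases j <;> simp [hsum, SchStep.h]

lemma chld_valid (k : ℕ) (p : List SchStep) (hp : IsSchroderPath k p) (o : ℕ)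
    (ho : o ≤ trail p + 1) : IsSchroderPath (k+1) (chld p o) := by
  rw [isPath_iff] at hp ⊢
  obtain ⟨hw, hh, ht⟩ := hp
  rcases Nat.eq_zero_or_pos o with rfl | hpos
  · rw [chld, if_pos rfl]
    refine ⟨by rw [wsum_append, hw]; simp [wsum, SchStep.x]; ring, ?_, ?_⟩
    · rw [hsum_append, hh]; simp [hsum, SchStep.h]
    · intro i
      rw [hsum_take_append]
      split
      · exact ht i
      · rw [hh, hsum_take_F]; omega
  · rw [chld_eq_decomp p o hpos]
    set A := p.take (p.length - (o-1)) with hA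
    set B := p.drop (p.length - (o-1)) with hB
    have hpAB : p = A ++ B := (List.take_append_drop _ p).symm
    have hwp : wsum p = wsum A + wsum B := by rw [hpAB, wsum_append]
    have hhp : hsum A + hsum B = 0 := by rw [← hsum_append, ← hpAB]; exact hh
    refine ⟨?_, ?_, ?_⟩
    · rw [wsum_append, wsum_cons, wsum_append]
      simp only [SchStep.x]
      have h1 : wsum [SchStep.D] = 1 := rfl
      rw [h1]
      omega
    · rw [hsum_append, hsum_cons, hsum_append]
      simp only [hsum, SchStep.h, List.map_cons, List.map_nil, List.sum_cons, List.sum_nil]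
      rw [show (A.map SchStep.h).sum = hsum A from rfl,
        show (B.map SchStep.h).sum = hsum B from rfl]
      omega
    · intro i
      rw [hsum_take_append]
      split
      · rename_i hi
        have : p.take i = A.take i := by
          rw [hpAB, take_append_left _ _ _ hi]
        have h0 := ht i
        rw [this] at h0
        exact h0
      · rename_i hi
        push_neg at hi
        obtain ⟨j, hj⟩ : ∃ j, i - A.length = j + 1 := ⟨i - A.length - 1, by omega⟩
        rw [hj, List.take_succ_cons, hsum_cons, hsum_take_append]
        have key : ∀ j', 0 ≤ hsum A + hsum (B.take j') := by
          intro j'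
          have : p.take (A.length + j') = A ++ B.take j' := by
            rw [hpAB, List.take_append,
              List.take_of_length_le (by omega), Nat.add_sub_cancel_left]
          have h0 := ht (A.length + j')
          rw [this, hsum_append] at h0
          exact h0
        split
        · have := key j
          simp only [SchStep.h]
          omega
        · have := hsum_take_D (j - B.length)
          have h2 : B.take j = B := List.take_of_length_le (by omega)
          have := key j
          rw [h2] at this
          simp only [SchStep.h]
          omega

lemma dropWhile_head_false {α : Type*} {P : α → Bool} :
    ∀ (l : List α) {s : α} {tl : List α}, l.dropWhile P = s :: tl → P s = false := by
  intro l
  induction l with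
  | nil => intro s tl h; simp [List.dropWhile] at h
  | cons a t ih =>
    intro s tl h
    rw [List.dropWhile_cons] at h
    split at h
    · exact ih h
    · rename_i hPa
      obtain ⟨rfl, rfl⟩ := List.cons.injEq .. ▸ h
      simpa using hPa

lemma exists_decomp_of_U_mem (q : List SchStep) (hU : SchStep.U ∈ q) :
    ∃ A B, q = A ++ SchStep.U :: B ∧ ∀ s ∈ B, nonU s = true := by
  set r := q.reverse with hr
  have hUr : SchStep.U ∈ r := List.mem_reverse.2 hU
  cases hdw : r.dropWhile nonU with
  | nil =>
    exfalso
    have : r = r.takeWhile nonU := by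
      conv_lhs => rw [← List.takeWhile_append_dropWhile (p := nonU) (l := r)]
      rw [hdw, List.append_nil]
    have := List.mem_takeWhile_imp (this ▸ hUr)
    simp [nonU] at this
  | cons s tl =>
    have hs : s = SchStep.U := not_nonU_eq_U (by simp [dropWhile_head_false r hdw])
    subst hs
    have hmemT : ∀ s ∈ List.takeWhile nonU r, nonU s = true := fun s hs => List.mem_takeWhile_imp hs
    obtain ⟨T, hT⟩ : ∃ T, List.takeWhile nonU r = T := ⟨_, rfl⟩
    rw [hT] at hmemT
    have hrdec : r = T ++ SchStep.U :: tl := by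
      conv_lhs => rw [← List.takeWhile_append_dropWhile (p := nonU) (l := r)]
      rw [hdw, hT]
    refine ⟨tl.reverse, T.reverse, ?_, ?_⟩
    · have : q = r.reverse := by rw [hr, List.reverse_reverse]
      rw [this, hrdec]
      simp
    · intro s hs
      exact hmemT s (List.mem_reverse.1 hs)

lemma trail_ge (A B : List SchStep) (hB : ∀ s ∈ B, nonU s = true) :
    B.length ≤ trail (A ++ B) := by
  rw [trail, List.reverse_append,
    takeWhile_append_all _ (fun s hs => hB s (List.mem_reverse.1 hs))]
  simp

lemma getLast_ne_U (k : ℕ) (q : List SchStep) (hq : IsSchroderPath k q) :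
    ¬ q.getLast? = some SchStep.U := by
  intro h
  have hdec := List.dropLast_append_getLast? _ h
  obtain ⟨hw, hh, hpre⟩ := hq
  have h1 : 0 ≤ hsum q.dropLast := hpre _ ⟨[SchStep.U], hdec⟩
  have h2 : hsum q = hsum q.dropLast + 1 := by
    conv_lhs => rw [← hdec]
    rw [hsum_append]; simp [hsum, SchStep.h]
  rw [show (q.map SchStep.h).sum = hsum q from rfl] at hh
  omega

lemma exists_par (k : ℕ) (q : List SchStep) (hq : IsSchroderPath (k+1) q) :
    IsSchroderPath k (par q) ∧ ∃ o, o ≤ trail (par q) + 1 ∧ chld (par q) o = q := by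
  have hqne : q ≠ [] := by
    intro h
    obtain ⟨hw, _, _⟩ := hq
    rw [h] at hw
    simp at hw
  have hlast : q.getLast? = some (q.getLast hqne) := List.getLast?_eq_getLast hqne
  have hdec := List.dropLast_append_getLast? _ hlast
  obtain ⟨hw, hh, hpre⟩ := hq
  rw [show (q.map SchStep.h).sum = hsum q from rfl] at hh
  rw [show (q.map SchStep.x).sum = wsum q from rfl] at hw
  cases hL : q.getLast hqne with
  | U => exact absurd (hL ▸ hlast) (getLast_ne_U (k+1) q ⟨hw, hh, hpre⟩)
  | F =>
    rw [hL] at hlast hdec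
    have hpar : par q = q.dropLast := by rw [par, if_pos hlast]
    have hvalid : IsSchroderPath k q.dropLast := by
      refine ⟨?_, ?_, ?_⟩
      · have : wsum q = wsum q.dropLast + 2 := by
          conv_lhs => rw [← hdec]
          rw [wsum_append]; simp [wsum, SchStep.x]
        rw [show (q.dropLast.map SchStep.x).sum = wsum q.dropLast from rfl]
        omega
      · have : hsum q = hsum q.dropLast := by
          conv_lhs => rw [← hdec]
          rw [hsum_append]; simp [hsum, SchStep.h]
        rw [show (q.dropLast.map SchStep.h).sum = hsum q.dropLast from rfl]
        omega
      · intro r hr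
        exact hpre r (hr.trans ⟨[SchStep.F], hdec⟩)
    refine ⟨hpar ▸ hvalid, 0, by omega, ?_⟩
    rw [chld, if_pos rfl, hpar, hdec]
  | D =>
    rw [hL] at hlast hdec
    have hh'' : hsum q.dropLast = 1 := by
      have : hsum q = hsum q.dropLast + (-1) := by
        conv_lhs => rw [← hdec]
        rw [hsum_append]; simp [hsum, SchStep.h]
      omega
    have hU : SchStep.U ∈ q.dropLast := by
      by_contra hU
      have : ∀ s ∈ q.dropLast, nonU s = true := by
        intro s hs
        cases s
        · exact absurd hs hU
        · rfl
        · rfl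
      have := hsum_nonpos _ this
      omega
    obtain ⟨A, B, hAB, hBnonU⟩ := exists_decomp_of_U_mem _ hU
    have hqdec : q = A ++ SchStep.U :: (B ++ [SchStep.D]) := by
      conv_lhs => rw [← hdec]
      rw [hAB]
      simp
    have hpar : par q = A ++ B := by rw [hqdec]; exact par_decomp A B hBnonU
    have hhAB : hsum A + hsum B = 0 := by
      have : hsum q = hsum A + 1 + (hsum B + (-1)) := by
        rw [hqdec, hsum_append, hsum_cons, hsum_append]
        simp [hsum, SchStep.h]
        ring
      omega
    have htake : ∀ i, 0 ≤ hsum ((A ++ B).take i) := by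
      intro i
      rw [hsum_take_append]
      split
      · rename_i hi
        have h0 := hpre _ (List.take_prefix i q)
        rw [show ((q.take i).map SchStep.h).sum = hsum (q.take i) from rfl] at h0
        have : q.take i = A.take i := by
          rw [hqdec, take_append_left _ _ _ hi]
        rwa [this] at h0
      · have hsplit : hsum B = hsum (B.take (i - A.length)) + hsum (B.drop (i - A.length)) := by
          conv_lhs => rw [← List.take_append_drop (i - A.length) B]
          rw [hsum_append]
        have hdropnp : hsum (B.drop (i - A.length)) ≤ 0 :=
          hsum_nonpos _ (fun s hs => hBnonU s (List.drop_subset _ _ hs))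
        omega
    have hvalid : IsSchroderPath k (A ++ B) := by
      rw [isPath_iff]
      refine ⟨?_, ?_, htake⟩
      · have : wsum q = wsum A + 1 + (wsum B + 1) := by
          rw [hqdec, wsum_append, wsum_cons, wsum_append]
          simp [wsum, SchStep.x]
          ring
        rw [wsum_append]
        omega
      · rw [hsum_append]; exact hhAB
    refine ⟨hpar ▸ hvalid, B.length + 1, ?_, ?_⟩
    · rw [hpar]
      have := trail_ge A B hBnonU
      omega
    · rw [hpar, chld_eq_decomp _ _ (by omega)]
      have hlen : (A ++ B).length - (B.length + 1 - 1) = A.length := by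
        simp
      rw [hlen, List.take_left, List.drop_left]
      exact hqdec.symm

instance : Fintype SchStep where
  elems := {SchStep.U, SchStep.D, SchStep.F}
  complete := by intro s; cases s <;> decide

def bet : ℕ → ℕ → ℕ
  | 0, _ => 1
  | m+1, h => bet m (h+1) + ∑ d ∈ Finset.Icc 2 (h+1), bet m d

lemma length_le_wsum (p : List SchStep) : p.length ≤ wsum p := by
  induction p with
  | nil => simp [wsum]
  | cons s l ih =>
    rw [wsum_cons]
    have : 1 ≤ s.x := by cases s <;> simp [SchStep.x]
    simp only [List.length_cons]
    omega

lemma path_subset_finite (M : ℕ) {S : Set (List SchStep)}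
    (h : ∀ q ∈ S, IsSchroderPath M q) : S.Finite := by
  refine Set.Finite.subset (List.finite_length_le SchStep (2*M)) ?_
  intro q hq
  obtain ⟨hw, _, _⟩ := h q hq
  have := length_le_wsum q
  rw [show (q.map SchStep.x).sum = wsum q from rfl] at hw
  simpa using by omega

lemma ncard_biUnion {ι α : Type*} [DecidableEq ι] (s : Finset ι) (f : ι → Set α)
    (hfin : ∀ i ∈ s, (f i).Finite)
    (hdisj : ∀ i ∈ s, ∀ j ∈ s, i ≠ j → Disjoint (f i) (f j)) :
    (⋃ i ∈ s, f i).ncard = ∑ i ∈ s, (f i).ncard := by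
  induction s using Finset.induction_on with
  | empty => simp
  | insert a s ha ih =>
    rw [Finset.set_biUnion_insert, Finset.sum_insert ha,
      Set.ncard_union_eq ?disj ?f1 ?f2, ih (fun i hi => hfin i (by simp [hi]))
        (fun i hi j hj hij => hdisj i (by simp [hi]) j (by simp [hj]) hij)]
    case disj =>
      rw [Set.disjoint_iUnion_right]
      intro i
      rw [Set.disjoint_iUnion_right]
      intro hi
      have hi' : i ∈ s := by simpa using hi
      exact hdisj a (by simp) i (Finset.mem_insert_of_mem hi') (fun h => ha (h ▸ hi'))
    case f1 => exact hfin a (by simp)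
    case f2 =>
      refine Set.Finite.biUnion s.finite_toSet (fun i hi => hfin i ?_)
      exact Finset.mem_insert_of_mem (by simpa using hi)

lemma par_iter_valid : ∀ (m k : ℕ) (q : List SchStep), IsSchroderPath (k+m) q →
    IsSchroderPath k (par^[m] q) := by
  intro m
  induction m with
  | zero => intro k q hq; simpa using hq
  | succ m ih =>
    intro k q hq
    rw [Function.iterate_succ_apply]
    refine ih k (par q) ?_
    have := (exists_par (k+m) q (by rwa [show (k+m)+1 = k+(m+1) by omega])).1
    exact this

lemma count_anc : ∀ (m k : ℕ) (p : List SchStep), IsSchroderPath k p →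
    {q | IsSchroderPath (k+m) q ∧ par^[m] q = p}.ncard = bet m (trail p + 1) := by
  intro m
  induction m with
  | zero =>
    intro k p hp
    have hset : {q | IsSchroderPath (k+0) q ∧ par^[0] q = p} = {p} := by
      ext q
      simp only [Set.mem_setOf_eq, Function.iterate_zero_apply, Set.mem_singleton_iff]
      constructor
      · rintro ⟨_, rfl⟩; rfl
      · rintro rfl; exact ⟨hp, rfl⟩
    rw [hset, Set.ncard_singleton]
    rfl
  | succ m ih =>
    intro k p hp
    have hset : {q | IsSchroderPath (k+(m+1)) q ∧ par^[m+1] q = p}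
        = ⋃ o ∈ Finset.range (trail p + 2),
            {q | IsSchroderPath ((k+1)+m) q ∧ par^[m] q = chld p o} := by
      ext q
      simp only [Set.mem_setOf_eq, Set.mem_iUnion, Finset.mem_range, exists_prop]
      constructor
      · rintro ⟨hq, hpq⟩
        have hq' : IsSchroderPath ((k+1)+m) q := by rwa [show (k+1)+m = k+(m+1) by omega] 
        have hc : IsSchroderPath (k+1) (par^[m] q) := par_iter_valid m (k+1) q hq'
        obtain ⟨hcv, o, ho, hco⟩ := exists_par k (par^[m] q) hc
        have hparc : par (par^[m] q) = p := by
          rw [← Function.iterate_succ_apply' par m q]; exact hpq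
        rw [hparc] at hco ho
        exact ⟨o, by omega, hq', hco.symm⟩
      · rintro ⟨o, ho, hq, hc⟩
        refine ⟨by rwa [show k+(m+1) = (k+1)+m by omega], ?_⟩
        rw [Function.iterate_succ_apply' par m q, hc, par_chld p o (by omega)]
    rw [hset, ncard_biUnion]
    · have hcongr : ∀ o ∈ Finset.range (trail p + 2),
          {q | IsSchroderPath ((k+1)+m) q ∧ par^[m] q = chld p o}.ncard
            = bet m (trail (chld p o) + 1) := by
        intro o ho
        exact ih (k+1) (chld p o) (chld_valid k p hp o (by simp at ho; omega))
      rw [Finset.sum_congr rfl hcongr]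
      rw [Finset.sum_range_succ']
      have h0 : trail (chld p 0) = trail p + 1 := chld_trail_zero p
      have hx : ∀ x ∈ Finset.range (trail p + 1), bet m (trail (chld p (x+1)) + 1)
          = bet m (x + 2) := by
        intro x hx
        simp only [Finset.mem_range] at hx
        rw [chld_trail_pos p (x+1) (by omega) (by omega)]
      rw [Finset.sum_congr rfl hx, h0]
      show _ = bet (m+1) (trail p + 1)
      rw [show bet (m+1) (trail p + 1)
          = bet m (trail p + 2) + ∑ d ∈ Finset.Icc 2 (trail p + 2), bet m d from rfl]
      rw [show (∑ d ∈ Finset.Icc 2 (trail p + 2), bet m d)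
          = ∑ x ∈ Finset.range (trail p + 1), bet m (x+2) from ?_]
      · rw [show trail p + 1 + 1 = trail p + 2 by omega]
        omega
      · refine Finset.sum_nbij' (i := fun d => d - 2) (j := fun x => x + 2) ?_ ?_ ?_ ?_ ?_
        · intro d hd; simp only [Finset.mem_Icc] at hd; simp; omega
        · intro x hx; simp only [Finset.mem_range] at hx; simp only [Finset.mem_Icc]
          show 2 ≤ x + 2 ∧ x + 2 ≤ trail p + 2
          omega
        · intro d hd; simp only [Finset.mem_Icc] at hd
          show d - 2 + 2 = d
          omega
        · intro x hx
          show x + 2 - 2 = x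
          omega
        · intro d hd; simp only [Finset.mem_Icc] at hd
          show bet m d = bet m (d - 2 + 2)
          congr 1
          omega
    · intro o ho
      exact path_subset_finite ((k+1)+m) (fun q hq => hq.1)
    · intro i hi j hj hij
      rw [Set.disjoint_left]
      rintro q ⟨hq, hqi⟩ ⟨_, hqj⟩
      simp only [Finset.mem_range] at hi hj
      exact hij (chld_inj p i j (by omega) (by omega) (hqi ▸ hqj))

lemma isPath_zero_nil : IsSchroderPath 0 [] := by
  refine ⟨by simp, by simp, ?_⟩
  intro q hq
  rw [List.prefix_nil] at hq
  subst hq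
  simp

lemma trail_nil : trail ([] : List SchStep) = 0 := rfl

lemma schroder_count (m : ℕ) : {p : List SchStep | IsSchroderPath m p}.ncard = bet m 1 := by
  have hset : {p : List SchStep | IsSchroderPath m p}
      = {q | IsSchroderPath (0+m) q ∧ par^[m] q = []} := by
    ext q
    simp only [Set.mem_setOf_eq, Nat.zero_add]
    constructor
    · intro hq
      refine ⟨hq, ?_⟩
      have h0 : IsSchroderPath 0 (par^[m] q) := par_iter_valid m 0 q (by simpa using hq)
      obtain ⟨hw, _, _⟩ := h0
      exact wsum_eq_zero (by simpa [wsum] using hw)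
    · rintro ⟨hq, _⟩; exact hq
  rw [hset, count_anc m 0 [] isPath_zero_nil, trail_nil]

/-- Two-parameter count of restricted inversion-sequence tails. -/
def Bf : ℕ → ℕ → ℕ → ℕ
  | 0, _, _ => 1
  | m+1, c, l => Bf m (c+1) l + ∑ x ∈ Finset.Icc l c, Bf m (c+1) x

lemma Bf_shift (m : ℕ) : ∀ c l k, Bf m (c+k) (l+k) = Bf m c l := by
  induction m with
  | zero => intros; rfl
  | succ m ih =>
    intro c l k
    show Bf m (c+k+1) (l+k) + ∑ x ∈ Finset.Icc (l+k) (c+k), Bf m (c+k+1) x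
        = Bf m (c+1) l + ∑ x ∈ Finset.Icc l c, Bf m (c+1) x
    have h1 : Bf m (c+k+1) (l+k) = Bf m (c+1) l := by
      have := ih (c+1) l k; rw [← this]; ring_nf
    rw [h1]
    congr 1
    rw [show Finset.Icc (l+k) (c+k) = (Finset.Icc l c).map (addRightEmbedding k) by
      simp [Finset.map_add_right_Icc]]
    rw [Finset.sum_map]
    refine Finset.sum_congr rfl ?_
    intro x hx
    have := ih (c+1) x k
    simpa [addRightEmbedding, add_comm, add_assoc, add_left_comm] using this

lemma Bf_eq_bet (m : ℕ) : ∀ c, Bf m c 1 = bet m c := by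
  induction m with
  | zero => intro c; rfl
  | succ m ih =>
    intro c
    show Bf m (c+1) 1 + ∑ x ∈ Finset.Icc 1 c, Bf m (c+1) x
        = bet m (c+1) + ∑ d ∈ Finset.Icc 2 (c+1), bet m d
    rw [ih]
    congr 1
    -- reindex x ↦ c + 2 - x
    rw [Finset.sum_nbij' (i := fun x => c + 2 - x) (j := fun d => c + 2 - d)]
    · intro x hx
      simp only [Finset.mem_Icc] at hx ⊢
      omega
    · intro d hd
      simp only [Finset.mem_Icc] at hd ⊢
      omega
    · intro x hx; simp only [Finset.mem_Icc] at hx; omega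
    · intro d hd; simp only [Finset.mem_Icc] at hd; omega
    · intro x hx
      simp only [Finset.mem_Icc] at hx
      have h1 : Bf m (c+1) x = Bf m ((c+2-x)+(x-1)) (1+(x-1)) := by
        congr 1 <;> omega
      rw [h1, Bf_shift, ih]

lemma bet_succ_zero (m : ℕ) : bet (m+1) 0 = bet m 1 := by
  show bet m 1 + ∑ d ∈ Finset.Icc 2 1, bet m d = bet m 1
  simp

/-- Validity predicate for tails of 021-avoiding inversion sequences:
entries bounded by position plus `c`, nonzero entries at least `l` and
weakly increasing. -/
def Good : ℕ → ℕ → List ℕ → Prop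
  | _, _, [] => True
  | c, l, x :: L => (x = 0 ∧ Good (c+1) l L) ∨ (l ≤ x ∧ x ≤ c ∧ Good (c+1) x L)

/-- The finite set of valid tails of given length. -/
def ISF : ℕ → ℕ → ℕ → Finset (List ℕ)
  | 0, _, _ => {[]}
  | m+1, c, l => ((ISF m (c+1) l).image (List.cons 0)) ∪
      (Finset.Icc l c).biUnion (fun x => (ISF m (c+1) x).image (List.cons x))

lemma mem_ISF (m : ℕ) : ∀ c l (L : List ℕ), 1 ≤ l →
    (L ∈ ISF m c l ↔ L.length = m ∧ Good c l L) := by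
  induction m with
  | zero =>
    intro c l L _
    constructor
    · intro h
      simp only [ISF, Finset.mem_singleton] at h
      subst h; exact ⟨rfl, trivial⟩
    · intro ⟨h1, _⟩
      rw [List.length_eq_zero_iff] at h1
      subst h1; simp [ISF]
  | succ m ih =>
    intro c l L hl
    simp only [ISF, Finset.mem_union, Finset.mem_image, Finset.mem_biUnion, Finset.mem_Icc]
    constructor
    · rintro (⟨T, hT, rfl⟩ | ⟨x, ⟨hlx, hxc⟩, T, hT, rfl⟩)
      · rw [ih _ _ _ hl] at hT
        exact ⟨by simp [hT.1], Or.inl ⟨rfl, hT.2⟩⟩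
      · rw [ih _ _ _ (le_trans hl hlx)] at hT
        exact ⟨by simp [hT.1], Or.inr ⟨hlx, hxc, hT.2⟩⟩
    · rintro ⟨hlen, hg⟩
      match L, hg with
      | x :: T, hg =>
        simp only [List.length_cons, Nat.succ_inj] at hlen
        rcases hg with ⟨rfl, hg⟩ | ⟨h1, h2, hg⟩
        · exact Or.inl ⟨T, (ih _ _ _ hl).2 ⟨hlen, hg⟩, rfl⟩
        · exact Or.inr ⟨x, ⟨h1, h2⟩, T, (ih _ _ _ (le_trans hl h1)).2 ⟨hlen, hg⟩, rfl⟩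

lemma card_ISF (m : ℕ) : ∀ c l, 1 ≤ l → (ISF m c l).card = Bf m c l := by
  induction m with
  | zero => intros; rfl
  | succ m ih =>
    intro c l hl
    show (((ISF m (c+1) l).image (List.cons 0)) ∪
      (Finset.Icc l c).biUnion (fun x => (ISF m (c+1) x).image (List.cons x))).card
      = Bf m (c+1) l + ∑ x ∈ Finset.Icc l c, Bf m (c+1) x
    rw [Finset.card_union_of_disjoint, Finset.card_image_of_injective _ (List.cons_injective),
      Finset.card_biUnion, ih _ _ hl]
    · congr 1
      refine Finset.sum_congr rfl fun x hx => ?_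
      rw [Finset.card_image_of_injective _ (List.cons_injective),
        ih _ _ (le_trans hl (Finset.mem_Icc.1 hx).1)]
    · intro x hx y hy hxy
      simp only [Finset.disjoint_left, Finset.mem_image]
      rintro L ⟨T, _, rfl⟩ ⟨T', _, hT'⟩
      exact hxy (List.cons.injEq .. ▸ hT').1.symm
    · simp only [Finset.disjoint_left, Finset.mem_image, Finset.mem_biUnion]
      rintro L ⟨T, _, rfl⟩ ⟨x, hx, T', _, hT'⟩
      have hx0 : x = 0 := (List.cons.injEq .. ▸ hT').1
      have := (Finset.mem_Icc.1 hx).1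
      omega

/-- Function version of `Good`. -/
def GoodF {m : ℕ} (c l : ℕ) (e : Fin m → ℕ) : Prop :=
  (∀ i, e i ≤ (i : ℕ) + c) ∧ (∀ i j : Fin m, i < j → e i ≠ 0 → e j ≠ 0 → e i ≤ e j) ∧
    (∀ i, e i ≠ 0 → l ≤ e i)

lemma good_ofFn (m : ℕ) : ∀ c l (e : Fin m → ℕ), Good c l (List.ofFn e) ↔ GoodF c l e := by
  induction m with
  | zero =>
    intro c l e
    simp only [List.ofFn_zero, GoodF]
    constructor
    · intro _; exact ⟨fun i => i.elim0, fun i => i.elim0, fun i => i.elim0⟩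
    · intro _; trivial
  | succ m ih =>
    intro c l e
    rw [List.ofFn_succ]
    show (e 0 = 0 ∧ Good (c+1) l _) ∨ (l ≤ e 0 ∧ e 0 ≤ c ∧ Good (c+1) (e 0) _) ↔ _
    rw [ih, ih]
    have hsucc : ∀ (i' j' : Fin m), (i'.succ < j'.succ) ↔ i' < j' := by
      intro i' j'; rw [Fin.lt_def, Fin.lt_def]; simp
    have hzlt : ∀ (j' : Fin m), (0 : Fin (m+1)) < j'.succ := by
      intro j'; rw [Fin.lt_def]; simp
    constructor
    · rintro (⟨h0, hb, hm, hl⟩ | ⟨h1, h2, hb, hm, hl⟩)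
      · refine ⟨?_, ?_, ?_⟩
        · intro i
          rcases Fin.eq_zero_or_eq_succ i with rfl | ⟨j, rfl⟩
          · simp [h0]
          · have h2 : e j.succ ≤ (j : ℕ) + (c+1) := hb j
            simp only [Fin.val_succ]; omega
        · intro i j hij hi hj
          rcases Fin.eq_zero_or_eq_succ i with rfl | ⟨i', rfl⟩
          · exact absurd h0 hi
          · rcases Fin.eq_zero_or_eq_succ j with rfl | ⟨j', rfl⟩
            · exact absurd hij (by rw [Fin.lt_def]; simp)
            · exact hm i' j' ((hsucc _ _).1 hij) hi hj
        · intro i hi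
          rcases Fin.eq_zero_or_eq_succ i with rfl | ⟨i', rfl⟩
          · exact absurd h0 hi
          · exact hl i' hi
      · refine ⟨?_, ?_, ?_⟩
        · intro i
          rcases Fin.eq_zero_or_eq_succ i with rfl | ⟨j, rfl⟩
          · simpa using h2
          · have h3 : e j.succ ≤ (j : ℕ) + (c+1) := hb j
            simp only [Fin.val_succ]; omega
        · intro i j hij hi hj
          rcases Fin.eq_zero_or_eq_succ j with rfl | ⟨j', rfl⟩
          · exact absurd hij (by rw [Fin.lt_def]; simp)
          · rcases Fin.eq_zero_or_eq_succ i with rfl | ⟨i', rfl⟩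
            · exact hl j' hj
            · exact hm i' j' ((hsucc _ _).1 hij) hi hj
        · intro i hi
          rcases Fin.eq_zero_or_eq_succ i with rfl | ⟨i', rfl⟩
          · exact h1
          · exact le_trans h1 (hl i' hi)
    · rintro ⟨hb, hm, hl⟩
      by_cases h0 : e 0 = 0
      · refine Or.inl ⟨h0, ?_, ?_, ?_⟩
        · intro i
          show e i.succ ≤ (i : ℕ) + (c+1)
          have := hb i.succ; simp only [Fin.val_succ] at this; omega
        · intro i j hij hi hj; exact hm i.succ j.succ ((hsucc _ _).2 hij) hi hj
        · intro i hi; exact hl i.succ hi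
      · refine Or.inr ⟨hl 0 h0, by simpa using hb 0, ?_, ?_, ?_⟩
        · intro i
          show e i.succ ≤ (i : ℕ) + (c+1)
          have := hb i.succ; simp only [Fin.val_succ] at this; omega
        · intro i j hij hi hj; exact hm i.succ j.succ ((hsucc _ _).2 hij) hi hj
        · intro i hi; exact hm 0 i.succ (hzlt i) h0 hi

lemma orig_eq_goodF (n : ℕ) (hn : 1 ≤ n) :
    {e : Fin n → ℕ | (∀ i : Fin n, e i ≤ (i : ℕ)) ∧
      ¬ ∃ i j k : Fin n, i < j ∧ j < k ∧ e i < e k ∧ e k < e j}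
    = {e : Fin n → ℕ | GoodF 0 1 e} := by
  ext e
  simp only [Set.mem_setOf_eq, GoodF]
  constructor
  · rintro ⟨hb, hav⟩
    refine ⟨fun i => by simpa using hb i, ?_, fun i hi => by omega⟩
    intro i j hij hi hj
    by_contra hc
    refine hav ⟨⟨0, hn⟩, i, j, ?_, hij, ?_, by omega⟩
    · have := hb i
      rw [Fin.lt_def]
      simp only []
      omega
    · have := hb ⟨0, hn⟩
      simp only [] at this
      omega
  · rintro ⟨hb, hm, _⟩
    refine ⟨fun i => by simpa using hb i, ?_⟩
    rintro ⟨i, j, k, hij, hjk, h1, h2⟩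
    have := hm j k hjk (by omega) (by omega)
    omega

lemma goodF_ncard (n : ℕ) :
    {e : Fin n → ℕ | GoodF 0 1 e}.ncard = (ISF n 0 1).card := by
  rw [← Set.ncard_image_of_injective {e : Fin n → ℕ | GoodF 0 1 e} List.ofFn_injective]
  rw [show List.ofFn '' {e : Fin n → ℕ | GoodF 0 1 e} = ↑(ISF n 0 1) from ?_,
    Set.ncard_coe_finset]
  ext L
  simp only [Set.mem_image, Set.mem_setOf_eq, Finset.coe_sort_coe, Finset.mem_coe]
  constructor
  · rintro ⟨e, he, rfl⟩
    exact (mem_ISF n 0 1 _ le_rfl).2 ⟨List.length_ofFn (f := e), (good_ofFn n 0 1 e).2 he⟩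
  · intro hL
    obtain ⟨hlen, hg⟩ := (mem_ISF n 0 1 L le_rfl).1 hL
    subst hlen
    exact ⟨L.get, (good_ofFn _ 0 1 L.get).1 (by rwa [List.ofFn_get]), List.ofFn_get L⟩

/-- For `n ≥ 1`, the number of inversion sequences of length `n` avoiding the
pattern 021 equals the large Schröder number `r_{n-1}`, the number of
Schröder `(n-1)`-paths. -/
theorem inv_avoid_021_eq_schroder (n : ℕ) (hn : 1 ≤ n) :
    Set.ncard {e : Fin n → ℕ | (∀ i : Fin n, e i ≤ (i : ℕ)) ∧
      ¬ ∃ i j k : Fin n, i < j ∧ j < k ∧ e i < e k ∧ e k < e j} =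
    Set.ncard {p : List SchStep | IsSchroderPath (n - 1) p} := by
  rw [orig_eq_goodF n hn, goodF_ncard n, card_ISF n 0 1 le_rfl, Bf_eq_bet n 0,
    schroder_count (n-1)]
  obtain ⟨m, rfl⟩ : ∃ m, n = m + 1 := ⟨n-1, by omega⟩
  rw [bet_succ_zero]
  congr 1
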